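/- At each of the two points (π/2, π/2, π/2) and (−π/2, π/2, π/2), the gradient of L₁ vanishes, L₁ takes the value 1/4, and the Hessian matrix of L₁ (the 3×3 symmetric matrix of second partial derivatives in (Ω,β₁,β₂)) has both a strictly positive and a strictly negative eigenvalue; hence these points are saddle points of L₁. -/

import Mathlib

open Matrix

/-- The kinematic landscape function `L₁(Ω,β₁,β₂)`. -/
noncomputable def L1 (Ω β₁ β₂ : ℝ) : ℝ :=
  (1/8) * Real.sin β₂ ^ 2 * (3 + Real.cos (2*β₁))
  + (1/2) * Real.sin β₁ ^ 2 * Real.cos β₂ ^ 2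
  - (1/2) * Real.cos Ω * Real.sin β₁ * Real.sin (β₁/2) ^ 2 * Real.sin (2*β₂)

/-- `L₁` as a function on `ℝ³`. -/
noncomputable def L1v (v : Fin 3 → ℝ) : ℝ := L1 (v 0) (v 1) (v 2)

/-- Hessian matrix of second partial derivatives of `f : ℝⁿ → ℝ` at `p`. -/
noncomputable def hessian {n : ℕ} (f : (Fin n → ℝ) → ℝ) (p : Fin n → ℝ) :
    Matrix (Fin n) (Fin n) ℝ :=
  Matrix.of fun i j => fderiv ℝ (fun y => fderiv ℝ f y (Pi.single j 1)) p (Pi.single i 1)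

/-! ### Auxiliary machinery for explicit differentiation on `ℝ³` -/

noncomputable def pr (i : Fin 3) : (Fin 3 → ℝ) →L[ℝ] ℝ :=
  ContinuousLinearMap.proj i

lemma hasF_comp (i : Fin 3) {f : ℝ → ℝ} {f' : ℝ} {y : Fin 3 → ℝ}
    (h : HasDerivAt f f' (y i)) :
    HasFDerivAt (fun v : Fin 3 → ℝ => f (v i)) (f' • pr i) y :=
  h.comp_hasFDerivAt y ((pr i).hasFDerivAt)

lemma hasF_prod3 {f0 f1 f2 : ℝ → ℝ} {d0 d1 d2 : ℝ} (c : ℝ) {y : Fin 3 → ℝ}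
    (h0 : HasDerivAt f0 d0 (y 0)) (h1 : HasDerivAt f1 d1 (y 1)) (h2 : HasDerivAt f2 d2 (y 2)) :
    HasFDerivAt (fun v : Fin 3 → ℝ => c * f0 (v 0) * f1 (v 1) * f2 (v 2))
      ((c * d0 * f1 (y 1) * f2 (y 2)) • pr 0 + (c * f0 (y 0) * d1 * f2 (y 2)) • pr 1
        + (c * f0 (y 0) * f1 (y 1) * d2) • pr 2) y := by
  have H := (((hasF_comp 0 h0).const_mul c).mul (hasF_comp 1 h1)).mul (hasF_comp 2 h2)
  refine H.congr_fderiv ?_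
  ext v
  simp [pr]
  ring

-- univariate derivative helpers
lemma hd_one (t : ℝ) : HasDerivAt (fun _ : ℝ => (1:ℝ)) 0 t := hasDerivAt_const t 1
lemma hd_sin2x (t : ℝ) : HasDerivAt (fun t : ℝ => Real.sin (2*t)) (Real.cos (2*t) * 2) t :=
  (Real.hasDerivAt_sin _).comp t (by simpa using (hasDerivAt_id t).const_mul (2:ℝ))
lemma hd_cos2x (t : ℝ) : HasDerivAt (fun t : ℝ => Real.cos (2*t)) (-Real.sin (2*t) * 2) t :=
  (Real.hasDerivAt_cos _).comp t (by simpa using (hasDerivAt_id t).const_mul (2:ℝ))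
lemma hd_3pcos2x (t : ℝ) : HasDerivAt (fun t : ℝ => 3 + Real.cos (2*t)) (-Real.sin (2*t) * 2) t :=
  (hd_cos2x t).const_add 3
lemma hd_sinhalf (t : ℝ) : HasDerivAt (fun t : ℝ => Real.sin (t/2)) (Real.cos (t/2) * (1/2)) t :=
  (Real.hasDerivAt_sin _).comp t (by simpa using (hasDerivAt_id t).div_const 2)
lemma hd_coshalf (t : ℝ) : HasDerivAt (fun t : ℝ => Real.cos (t/2)) (-Real.sin (t/2) * (1/2)) t :=
  (Real.hasDerivAt_cos _).comp t (by simpa using (hasDerivAt_id t).div_const 2)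
lemma hd_sinhalfsq (t : ℝ) :
    HasDerivAt (fun t : ℝ => Real.sin (t/2) ^ 2)
      (2 * Real.sin (t/2) ^ 1 * (Real.cos (t/2) * (1/2))) t := (hd_sinhalf t).pow 2
lemma hd_sinsq (t : ℝ) : HasDerivAt (fun t : ℝ => Real.sin t ^ 2)
    (2 * Real.sin t ^ 1 * Real.cos t) t := (Real.hasDerivAt_sin t).pow 2
lemma hd_cossq (t : ℝ) : HasDerivAt (fun t : ℝ => Real.cos t ^ 2)
    (2 * Real.cos t ^ 1 * (-Real.sin t)) t := (Real.hasDerivAt_cos t).pow 2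
lemma hd_g (t : ℝ) : HasDerivAt (fun t : ℝ => Real.sin t * Real.sin (t/2) ^ 2)
    (Real.cos t * Real.sin (t/2) ^ 2
      + Real.sin t * (2 * Real.sin (t/2) ^ 1 * (Real.cos (t/2) * (1/2)))) t :=
  (Real.hasDerivAt_sin t).mul (hd_sinhalfsq t)
lemma hd_sincos (t : ℝ) : HasDerivAt (fun t : ℝ => Real.sin t * Real.cos t)
    (Real.cos t * Real.cos t + Real.sin t * (-Real.sin t)) t :=
  (Real.hasDerivAt_sin t).mul (Real.hasDerivAt_cos t)
lemma hd_gp (t : ℝ) :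
    HasDerivAt (fun t : ℝ =>
        Real.cos t * Real.sin (t/2) ^ 2 + Real.sin t * Real.sin (t/2) * Real.cos (t/2))
      ((-Real.sin t * Real.sin (t/2) ^ 2
          + Real.cos t * (2 * Real.sin (t/2) ^ 1 * (Real.cos (t/2) * (1/2))))
        + ((Real.cos t * Real.sin (t/2) + Real.sin t * (Real.cos (t/2) * (1/2))) * Real.cos (t/2)
            + Real.sin t * Real.sin (t/2) * (-Real.sin (t/2) * (1/2)))) t :=
  ((Real.hasDerivAt_cos t).mul (hd_sinhalfsq t)).add
    (((Real.hasDerivAt_sin t).mul (hd_sinhalf t)).mul (hd_coshalf t))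

/-! ### Partial derivatives of `L1v` -/

noncomputable def D0 (y : Fin 3 → ℝ) : ℝ :=
  (1/2) * Real.sin (y 0) * (Real.sin (y 1) * Real.sin (y 1 / 2) ^ 2) * Real.sin (2 * y 2)

noncomputable def D1 (y : Fin 3 → ℝ) : ℝ :=
  -(1/4) * Real.sin (2 * y 1) * Real.sin (y 2) ^ 2
  + Real.sin (y 1) * Real.cos (y 1) * Real.cos (y 2) ^ 2
  - (1/2) * Real.cos (y 0)
      * (Real.cos (y 1) * Real.sin (y 1 / 2) ^ 2
          + Real.sin (y 1) * Real.sin (y 1 / 2) * Real.cos (y 1 / 2))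
      * Real.sin (2 * y 2)

noncomputable def D2 (y : Fin 3 → ℝ) : ℝ :=
  (1/4) * Real.sin (y 2) * Real.cos (y 2) * (3 + Real.cos (2 * y 1))
  - Real.sin (y 1) ^ 2 * Real.cos (y 2) * Real.sin (y 2)
  - Real.cos (y 0) * (Real.sin (y 1) * Real.sin (y 1 / 2) ^ 2) * Real.cos (2 * y 2)

lemma hasF_L1v (y : Fin 3 → ℝ) :
    HasFDerivAt L1v (D0 y • pr 0 + D1 y • pr 1 + D2 y • pr 2) y := by
  have hT1 := hasF_prod3 (1/8) (hd_one (y 0)) (hd_3pcos2x (y 1)) (hd_sinsq (y 2))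
  have hT2 := hasF_prod3 (1/2) (hd_one (y 0)) (hd_sinsq (y 1)) (hd_cossq (y 2))
  have hT3 := hasF_prod3 (-(1/2)) (Real.hasDerivAt_cos (y 0)) (hd_g (y 1)) (hd_sin2x (y 2))
  have H := (hT1.add hT2).add hT3
  have hfun : L1v = fun v : Fin 3 → ℝ =>
      (1/8 : ℝ) * (fun _ : ℝ => (1:ℝ)) (v 0) * (3 + Real.cos (2 * v 1)) * Real.sin (v 2) ^ 2
      + (1/2 : ℝ) * (fun _ : ℝ => (1:ℝ)) (v 0) * Real.sin (v 1) ^ 2 * Real.cos (v 2) ^ 2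
      + (-(1/2) : ℝ) * Real.cos (v 0) * (Real.sin (v 1) * Real.sin (v 1 / 2) ^ 2)
          * Real.sin (2 * v 2) := by
    funext v
    simp only [L1v, L1]
    ring
  rw [hfun]
  refine H.congr_fderiv ?_
  ext v
  simp [pr, D0, D1, D2]
  ring

/-! ### Second derivatives -/

lemma hasF_D0 (y : Fin 3 → ℝ) :
    HasFDerivAt D0
      (((1/2 : ℝ) * Real.cos (y 0) * (Real.sin (y 1) * Real.sin (y 1 / 2) ^ 2)
          * Real.sin (2 * y 2)) • pr 0
        + ((1/2 : ℝ) * Real.sin (y 0)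
            * (Real.cos (y 1) * Real.sin (y 1 / 2) ^ 2
                + Real.sin (y 1) * (2 * Real.sin (y 1 / 2) ^ 1 * (Real.cos (y 1 / 2) * (1/2))))
            * Real.sin (2 * y 2)) • pr 1
        + ((1/2 : ℝ) * Real.sin (y 0) * (Real.sin (y 1) * Real.sin (y 1 / 2) ^ 2)
            * (Real.cos (2 * y 2) * 2)) • pr 2) y :=
  hasF_prod3 (1/2) (Real.hasDerivAt_sin (y 0)) (hd_g (y 1)) (hd_sin2x (y 2))

lemma hasF_D1 (y : Fin 3 → ℝ) :
    ∃ E : (Fin 3 → ℝ) →L[ℝ] ℝ, HasFDerivAt D1 E y ∧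
      (∀ i : Fin 3, E (Pi.single i 1) =
        ![(1/2) * Real.sin (y 0)
            * (Real.cos (y 1) * Real.sin (y 1 / 2) ^ 2
                + Real.sin (y 1) * Real.sin (y 1 / 2) * Real.cos (y 1 / 2)) * Real.sin (2 * y 2),
          -(1/2) * Real.cos (2 * y 1) * Real.sin (y 2) ^ 2
            + (Real.cos (y 1) ^ 2 - Real.sin (y 1) ^ 2) * Real.cos (y 2) ^ 2
            - (1/2) * Real.cos (y 0)
                * ((-Real.sin (y 1) * Real.sin (y 1 / 2) ^ 2
                      + Real.cos (y 1) * Real.sin (y 1 / 2) * Real.cos (y 1 / 2))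
                    + (Real.cos (y 1) * Real.sin (y 1 / 2) * Real.cos (y 1 / 2)
                        + (1/2) * Real.sin (y 1) * Real.cos (y 1 / 2) ^ 2
                        - (1/2) * Real.sin (y 1) * Real.sin (y 1 / 2) ^ 2))
                * Real.sin (2 * y 2),
          -(1/2) * Real.sin (2 * y 1) * Real.sin (y 2) * Real.cos (y 2)
            - 2 * Real.sin (y 1) * Real.cos (y 1) * Real.cos (y 2) * Real.sin (y 2)
            - Real.cos (y 0)
                * (Real.cos (y 1) * Real.sin (y 1 / 2) ^ 2
                    + Real.sin (y 1) * Real.sin (y 1 / 2) * Real.cos (y 1 / 2))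
                * Real.cos (2 * y 2)] i) := by
  have hA := hasF_prod3 (-(1/4)) (hd_one (y 0)) (hd_sin2x (y 1)) (hd_sinsq (y 2))
  have hB := hasF_prod3 (1 : ℝ) (hd_one (y 0)) (hd_sincos (y 1)) (hd_cossq (y 2))
  have hC := hasF_prod3 (-(1/2)) (Real.hasDerivAt_cos (y 0)) (hd_gp (y 1)) (hd_sin2x (y 2))
  have H := (hA.add hB).add hC
  have hfun : D1 = fun v : Fin 3 → ℝ =>
      (-(1/4) : ℝ) * (fun _ : ℝ => (1:ℝ)) (v 0) * Real.sin (2 * v 1) * Real.sin (v 2) ^ 2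
      + (1 : ℝ) * (fun _ : ℝ => (1:ℝ)) (v 0) * (Real.sin (v 1) * Real.cos (v 1))
          * Real.cos (v 2) ^ 2
      + (-(1/2) : ℝ) * Real.cos (v 0)
          * (Real.cos (v 1) * Real.sin (v 1 / 2) ^ 2
              + Real.sin (v 1) * Real.sin (v 1 / 2) * Real.cos (v 1 / 2))
          * Real.sin (2 * v 2) := by
    funext v
    simp only [D1]
    ring
  refine ⟨_, by rw [hfun]; exact H, ?_⟩
  intro i
  fin_cases i <;>
    simp [pr, Pi.single_apply] <;> ring

lemma hasF_D2 (y : Fin 3 → ℝ) :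
    ∃ E : (Fin 3 → ℝ) →L[ℝ] ℝ, HasFDerivAt D2 E y ∧
      (∀ i : Fin 3, E (Pi.single i 1) =
        ![Real.sin (y 0) * (Real.sin (y 1) * Real.sin (y 1 / 2) ^ 2) * Real.cos (2 * y 2),
          -(1/2) * Real.sin (y 2) * Real.cos (y 2) * Real.sin (2 * y 1)
            - 2 * Real.sin (y 1) * Real.cos (y 1) * Real.cos (y 2) * Real.sin (y 2)
            - Real.cos (y 0)
                * (Real.cos (y 1) * Real.sin (y 1 / 2) ^ 2
                    + Real.sin (y 1) * Real.sin (y 1 / 2) * Real.cos (y 1 / 2))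
                * Real.cos (2 * y 2),
          (1/4) * (Real.cos (y 2) ^ 2 - Real.sin (y 2) ^ 2) * (3 + Real.cos (2 * y 1))
            - Real.sin (y 1) ^ 2 * (Real.cos (y 2) ^ 2 - Real.sin (y 2) ^ 2)
            + 2 * Real.cos (y 0) * (Real.sin (y 1) * Real.sin (y 1 / 2) ^ 2)
                * Real.sin (2 * y 2)] i) := by
  have hA := hasF_prod3 (1/4 : ℝ) (hd_one (y 0)) (hd_3pcos2x (y 1)) (hd_sincos (y 2))
  have hB := hasF_prod3 (-1 : ℝ) (hd_one (y 0)) (hd_sinsq (y 1)) (hd_sincos (y 2))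
  have hC := hasF_prod3 (-1 : ℝ) (Real.hasDerivAt_cos (y 0)) (hd_g (y 1)) (hd_cos2x (y 2))
  have H := (hA.add hB).add hC
  have hfun : D2 = fun v : Fin 3 → ℝ =>
      (1/4 : ℝ) * (fun _ : ℝ => (1:ℝ)) (v 0) * (3 + Real.cos (2 * v 1))
          * (Real.sin (v 2) * Real.cos (v 2))
      + (-1 : ℝ) * (fun _ : ℝ => (1:ℝ)) (v 0) * Real.sin (v 1) ^ 2
          * (Real.sin (v 2) * Real.cos (v 2))
      + (-1 : ℝ) * Real.cos (v 0) * (Real.sin (v 1) * Real.sin (v 1 / 2) ^ 2)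
          * Real.cos (2 * v 2) := by
    funext v
    simp only [D2]
    ring
  refine ⟨_, by rw [hfun]; exact H, ?_⟩
  intro i
  fin_cases i <;>
    simp [pr, Pi.single_apply] <;> ring

/-! ### Evaluation at the critical points -/

lemma fderiv_L1v_single (y : Fin 3 → ℝ) (j : Fin 3) :
    fderiv ℝ L1v y (Pi.single j 1) = ![D0 y, D1 y, D2 y] j := by
  rw [(hasF_L1v y).fderiv]
  fin_cases j <;> simp [pr, Pi.single_apply]

lemma grad_zero (p : Fin 3 → ℝ) (h0 : Real.cos (p 0) = 0)
    (h1 : p 1 = Real.pi/2) (h2 : p 2 = Real.pi/2) :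
    fderiv ℝ L1v p = 0 := by
  have e1 : (2:ℝ) * (Real.pi/2) = Real.pi := by ring
  have hD0 : D0 p = 0 := by simp [D0, h1, h2, e1]
  have hD1 : D1 p = 0 := by simp [D1, h0, h1, h2, e1]
  have hD2 : D2 p = 0 := by simp [D2, h0, h1, h2, e1]
  rw [(hasF_L1v p).fderiv, hD0, hD1, hD2]
  simp

lemma val_quarter (p : Fin 3 → ℝ) (h0 : Real.cos (p 0) = 0)
    (h1 : p 1 = Real.pi/2) (h2 : p 2 = Real.pi/2) :
    L1v p = 1/4 := by
  have e1 : (2:ℝ) * (Real.pi/2) = Real.pi := by ring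
  simp [L1v, L1, h0, h1, h2, e1]
  norm_num

lemma hessian_L1v (p : Fin 3 → ℝ) (h0 : Real.cos (p 0) = 0)
    (h1 : p 1 = Real.pi/2) (h2 : p 2 = Real.pi/2) :
    hessian L1v p =
      ![![0, 0, -(Real.sin (p 0)/2)], ![0, 1/2, 0], ![-(Real.sin (p 0)/2), 0, 1/2]] := by
  have e1 : (2:ℝ) * (Real.pi/2) = Real.pi := by ring
  have e2 : (Real.pi/2)/2 = Real.pi/4 := by ring
  have e3 : Real.sin (Real.pi/4) ^ 2 = 1/2 := by
    rw [Real.sin_pi_div_four, div_pow, Real.sq_sqrt] <;> norm_num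
  have e4 : Real.sin (Real.pi/4) * Real.cos (Real.pi/4) = 1/2 := by
    rw [Real.sin_pi_div_four, Real.cos_pi_div_four, div_mul_div_comm,
      Real.mul_self_sqrt] <;> norm_num
  have e5 : Real.sqrt 2 ^ 2 = 2 := Real.sq_sqrt (by norm_num)
  have e6 : Real.sqrt 2 * Real.sqrt 2 = 2 := Real.mul_self_sqrt (by norm_num)
  have e7 : (Real.sqrt 2 / 2) ^ 2 = 1/2 := by
    rw [div_pow, Real.sq_sqrt] <;> norm_num
  have e8 : Real.sqrt 2 / 2 * (Real.sqrt 2 / 2) = 1/2 := by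
    rw [div_mul_div_comm, Real.mul_self_sqrt] <;> norm_num
  obtain ⟨E1, hE1, hE1v⟩ := hasF_D1 p
  obtain ⟨E2, hE2, hE2v⟩ := hasF_D2 p
  have hf0 : (fun y => fderiv ℝ L1v y (Pi.single (0 : Fin 3) 1)) = D0 := by
    funext y; rw [fderiv_L1v_single]; simp
  have hf1 : (fun y => fderiv ℝ L1v y (Pi.single (1 : Fin 3) 1)) = D1 := by
    funext y; rw [fderiv_L1v_single]; simp
  have hf2 : (fun y => fderiv ℝ L1v y (Pi.single (2 : Fin 3) 1)) = D2 := by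
    funext y; rw [fderiv_L1v_single]; simp
  funext i j
  fin_cases j
  · -- column 0 : derivative of D0
    have := (hasF_D0 p).fderiv
    show fderiv ℝ (fun y => fderiv ℝ L1v y (Pi.single (0:Fin 3) 1)) p (Pi.single i 1) = _
    rw [hf0, this]
    fin_cases i <;>
      simp [pr, Pi.single_apply, h0, h1, h2, e1, e2, e3, e4, e5, e6, e7, e8] <;> ring
  · -- column 1 : derivative of D1
    show fderiv ℝ (fun y => fderiv ℝ L1v y (Pi.single (1:Fin 3) 1)) p (Pi.single i 1) = _
    rw [hf1, hE1.fderiv]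
    fin_cases i <;>
      rw [hE1v] <;>
      simp [h0, h1, h2, e1, e2, e3, e4, e5, e6, e7, e8] <;> ring
  · -- column 2 : derivative of D2
    show fderiv ℝ (fun y => fderiv ℝ L1v y (Pi.single (2:Fin 3) 1)) p (Pi.single i 1) = _
    rw [hf2, hE2.fderiv]
    fin_cases i <;>
      rw [hE2v] <;>
      simp [h0, h1, h2, e1, e2, e3, e4, e5, e6, e7, e8] <;> ring

/-! ### Eigenvalue facts for the Hessian -/

lemma eig_pos (a : ℝ) :
    Matrix.mulVec (![![0, 0, a], ![0, 1/2, 0], ![a, 0, 1/2]] : Matrix (Fin 3) (Fin 3) ℝ)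
      ![0, 1, 0] = (1/2 : ℝ) • ![0, 1, 0] := by
  funext i
  fin_cases i <;>
    simp [Matrix.mulVec, dotProduct, Fin.sum_univ_three]

lemma eig_neg (a : ℝ) (ha : a ^ 2 = 1/4) :
    Matrix.mulVec (![![0, 0, a], ![0, 1/2, 0], ![a, 0, 1/2]] : Matrix (Fin 3) (Fin 3) ℝ)
      ![a, 0, (1 - Real.sqrt 5)/4] = ((1 - Real.sqrt 5)/4 : ℝ) • ![a, 0, (1 - Real.sqrt 5)/4] := by
  have h5 : Real.sqrt 5 ^ 2 = 5 := Real.sq_sqrt (by norm_num)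
  funext i
  fin_cases i <;>
    simp [Matrix.mulVec, dotProduct, Fin.sum_univ_three] <;>
    nlinarith [h5, ha]

open Real in
/-- at the points (±π/2, π/2, π/2) the gradient of L₁ vanishes, L₁ = 1/4, and the Hessian has both a strictly positive and a strictly negative eigenvalue: these are saddle points. -/
theorem stmt6 (p : Fin 3 → ℝ)
    (hp : p = ![π/2, π/2, π/2] ∨ p = ![-(π/2), π/2, π/2]) :
    -- the gradient of L₁ vanishes at p
    fderiv ℝ L1v p = 0
    -- L₁ takes the value 1/4 at p
    ∧ L1v p = 1/4
    -- the Hessian has a strictly positive eigenvalue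
    ∧ (∃ (c : ℝ) (v : Fin 3 → ℝ), 0 < c ∧ v ≠ 0 ∧ (hessian L1v p).mulVec v = c • v)
    -- and a strictly negative eigenvalue (hence p is a saddle point)
    ∧ (∃ (c : ℝ) (v : Fin 3 → ℝ), c < 0 ∧ v ≠ 0 ∧ (hessian L1v p).mulVec v = c • v) := by
  have h0 : Real.cos (p 0) = 0 := by
    rcases hp with h | h <;> rw [h] <;> simp
  have h1 : p 1 = π/2 := by rcases hp with h | h <;> rw [h] <;> simp
  have h2 : p 2 = π/2 := by rcases hp with h | h <;> rw [h] <;> simp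
  have ha : (-(Real.sin (p 0)/2)) ^ 2 = 1/4 := by
    rcases hp with h | h <;> rw [h] <;> simp <;> norm_num
  have hane : (-(Real.sin (p 0)/2)) ≠ 0 := by
    rcases hp with h | h <;> rw [h] <;> simp <;> norm_num
  have hH := hessian_L1v p h0 h1 h2
  have h5lt : (1 : ℝ) < Real.sqrt 5 := by
    have := Real.sq_sqrt (show (0:ℝ) ≤ 5 by norm_num)
    nlinarith [Real.sqrt_nonneg 5]
  refine ⟨grad_zero p h0 h1 h2, val_quarter p h0 h1 h2, ?_, ?_⟩
  · refine ⟨1/2, ![0, 1, 0], by norm_num, ?_, by rw [hH]; exact eig_pos _⟩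
    intro h
    have := congrFun h 1
    simp at this
  · refine ⟨(1 - Real.sqrt 5)/4, ![-(Real.sin (p 0)/2), 0, (1 - Real.sqrt 5)/4],
      by linarith, ?_, by rw [hH]; exact eig_neg _ ha⟩
    intro h
    have := congrFun h 0
    simp at this
    exact hane (by simpa using this)
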